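/- Fix a weight system (v1,...,vn,d) with v_i < d and R ⊆ (ℕ₀ⁿ)_d, R_k as usual. Then condition (C3) implies condition (C2), where (C3): for all I, J ⊆ {1,...,n} with |I| < |J|, there exists k ∈ {1,...,n}∖I and α ∈ R_k supported in J; and (C2): for every nonempty J ⊆ {1,...,n} there exists K with |K| = |J| such that for all k ∈ K, R_k contains an element supported in J. -/

import Mathlib

theorem stmt13 (n : ℕ) (v : Fin n → ℕ) (d : ℕ)
    (hv : ∀ i, 0 < v i) (hvd : ∀ i, v i < d)
    (R : Set (Fin n → ℕ)) (hR : ∀ α ∈ R, ∑ i, α i * v i = d)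
    (Rk : Fin n → Set (Fin n → ℕ))
    (hRk : ∀ (k : Fin n) (α : Fin n → ℕ), α ∈ Rk k ↔
      (∑ i, α i * v i = d - v k ∧ (fun i => α i + if i = k then 1 else 0) ∈ R))
    (hC3 : ∀ I J : Finset (Fin n), I.card < J.card →
      ∃ k ∉ I, ∃ α ∈ Rk k, ∀ i, i ∉ J → α i = 0) :
    ∀ J : Finset (Fin n), J.Nonempty →
      ∃ K : Finset (Fin n), K.card = J.card ∧
        ∀ k ∈ K, ∃ α ∈ Rk k, ∀ i, i ∉ J → α i = 0 := by
  intro J _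
  have key : ∀ m, m ≤ J.card → ∃ K : Finset (Fin n), K.card = m ∧
      ∀ k ∈ K, ∃ α ∈ Rk k, ∀ i, i ∉ J → α i = 0 := by
    intro m
    induction m with
    | zero => intro _; exact ⟨∅, by simp⟩
    | succ m ih =>
      intro hm
      obtain ⟨K, hKcard, hKprop⟩ := ih (Nat.le_of_succ_le hm)
      obtain ⟨k, hk, α, hα, hαJ⟩ := hC3 K J (by omega)
      refine ⟨insert k K, ?_, ?_⟩
      · rw [Finset.card_insert_of_notMem hk, hKcard]
      · intro k' hk'
        rcases Finset.mem_insert.mp hk' with h | h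
        · exact h ▸ ⟨α, hα, hαJ⟩
        · exact hKprop k' h
  exact key J.card le_rfl
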